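/- Let q ≥ 5 be a prime power and let μ ∈ F_q^* with μ ≠ 1, and additionally μ ≠ 1/9 when q is odd and not divisible by 3. Let Ñ₁(μ) be the number of c ∈ F_q^* such that the cubic t³ + ct² - t - μc has exactly one root in F_q. Then the number of planes of PG(3,q) that contain the line ℓ_μ, contain exactly one point of the twisted cubic C, and are not osculating planes, equals Ñ₁(μ) if μ is a square in F_q and equals Ñ₁(μ) + 1 if μ is a non-square in F_q. -/

import Mathlib

/-- The spanning vector of the point `P(τ)` of the twisted cubic:
`P(t) = (t³, t², t, 1)` for `t ∈ F_q`, and `P(∞) = (1,0,0,0)`. -/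
def Pvec {F : Type*} [Field F] : Option F → (Fin 4 → F)
  | none => ![1, 0, 0, 0]
  | some t => ![t ^ 3, t ^ 2, t, 1]

/-- The osculating plane `π_osc(t)` of the twisted cubic, as a subset of `F_q⁴`. -/
def oscSet {F : Type*} [Field F] : Option F → Set (Fin 4 → F)
  | none => {x | x 3 = 0}
  | some t => {x | x 0 - 3 * t * x 1 + 3 * t ^ 2 * x 2 - t ^ 3 * x 3 = 0}

section Aux
variable {F : Type*} [Field F]

/-- The linear functional `x ↦ a x₀ + b x₁ + c x₂ + d x₃`. -/
def lfun (a b c d : F) : (Fin 4 → F) →ₗ[F] F :=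
  a • LinearMap.proj 0 + b • LinearMap.proj 1 + c • LinearMap.proj 2 + d • LinearMap.proj 3

lemma lfun_apply (a b c d : F) (x : Fin 4 → F) :
    lfun a b c d x = a * x 0 + b * x 1 + c * x 2 + d * x 3 := by
  simp [lfun, smul_eq_mul]

lemma mem_ker_lfun (a b c d : F) (x : Fin 4 → F) :
    x ∈ LinearMap.ker (lfun a b c d) ↔ a * x 0 + b * x 1 + c * x 2 + d * x 3 = 0 := by
  rw [LinearMap.mem_ker, lfun_apply]

lemma finrank_ker_lfun (a b c d : F) (h : a ≠ 0 ∨ b ≠ 0) :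
    Module.finrank F (LinearMap.ker (lfun a b c d)) = 3 := by
  have hsurj : Function.Surjective (lfun a b c d) := by
    intro y
    rcases h with h | h
    · exact ⟨![a⁻¹ * y, 0, 0, 0], by rw [lfun_apply]; simp; field_simp⟩
    · exact ⟨![0, b⁻¹ * y, 0, 0], by rw [lfun_apply]; simp; field_simp⟩
  have := LinearMap.finrank_range_add_finrank_ker (lfun a b c d)
  rw [LinearMap.range_eq_top.mpr hsurj] at this
  simp [Module.finrank_pi] at this
  omega

lemma spanP_inj : Function.Injective (fun τ : Option F => Submodule.span F {Pvec τ}) := by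
  intro τ σ h
  simp only at h
  have h1 : Pvec τ ∈ Submodule.span F {Pvec σ} := by
    rw [← h]; exact Submodule.mem_span_singleton_self _
  rw [Submodule.mem_span_singleton] at h1
  obtain ⟨k, hk⟩ := h1
  match τ, σ with
  | none, none => rfl
  | none, some t =>
      exfalso
      have h3 := congrFun hk 3
      have h0 := congrFun hk 0
      simp [Pvec] at h3 h0
      rw [h3] at h0; simp at h0
  | some t, none =>
      exfalso
      have h3 := congrFun hk 3
      simp [Pvec] at h3
  | some t, some s =>
      have h3 := congrFun hk 3
      have h2 := congrFun hk 2
      simp [Pvec] at h3 h2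
      rw [h3] at h2; simp at h2; rw [h2]

lemma ker_eq_of_scale (a b c d k : F) (hk : k ≠ 0) :
    LinearMap.ker (lfun (k*a) (k*b) (k*c) (k*d)) = LinearMap.ker (lfun a b c d) := by
  ext x
  simp only [LinearMap.mem_ker, lfun_apply]
  constructor
  · intro h
    apply mul_left_cancel₀ hk
    rw [mul_zero]
    linear_combination h
  · intro h
    linear_combination k * h

lemma plane_classify (μ : F) (W : Submodule F (Fin 4 → F))
    (h3 : Module.finrank F W = 3)
    (hle : Submodule.span F {![0, μ, 0, 1], ![1, 0, 1, 0]} ≤ W) :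
    W = LinearMap.ker (lfun (1:F) 0 (-1) 0) ∨
      ∃ a : F, W = LinearMap.ker (lfun a 1 (-a) (-μ)) := by
  have hfd : Module.finrank F (Fin 4 → F) = 4 := by simp [Module.finrank_pi]
  have hq : Module.finrank F ((Fin 4 → F) ⧸ W) = 1 := by
    have := Submodule.finrank_quotient_add_finrank W
    rw [hfd, h3] at this; omega
  have hFF : Module.finrank F F = 1 := Module.finrank_self F
  let e : ((Fin 4 → F) ⧸ W) ≃ₗ[F] F := LinearEquiv.ofFinrankEq _ _ (hq.trans hFF.symm)
  set f : (Fin 4 → F) →ₗ[F] F := e.toLinearMap ∘ₗ W.mkQ with hf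
  have hker : LinearMap.ker f = W := by
    rw [hf, LinearMap.ker_comp, LinearEquiv.ker, Submodule.comap_bot, Submodule.ker_mkQ]
  have hrepr : ∀ x, f x = f (Pi.single 0 1) * x 0 + f (Pi.single 1 1) * x 1
      + f (Pi.single 2 1) * x 2 + f (Pi.single 3 1) * x 3 := by
    intro x
    have := LinearMap.pi_apply_eq_sum_univ f x
    rw [this, Fin.sum_univ_four]
    simp only [smul_eq_mul]
    have hsingle : ∀ i : Fin 4, (fun j => if i = j then (1:F) else 0) = Pi.single i 1 := by
      intro i; funext j
      by_cases h : i = j <;> simp [Pi.single_apply, h, eq_comm]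
    rw [hsingle 0, hsingle 1, hsingle 2, hsingle 3]; ring
  set a0 := f (Pi.single 0 1)
  set a1 := f (Pi.single 1 1)
  set a2 := f (Pi.single 2 1)
  set a3 := f (Pi.single 3 1)
  have hv1 : f ![0, μ, 0, 1] = 0 := by
    rw [← LinearMap.mem_ker, hker]
    exact hle (Submodule.subset_span (Set.mem_insert _ _))
  have hv2 : f ![1, 0, 1, 0] = 0 := by
    rw [← LinearMap.mem_ker, hker]
    exact hle (Submodule.subset_span (Set.mem_insert_of_mem _ rfl))
  rw [hrepr] at hv1 hv2
  simp [Matrix.cons_val_zero, Matrix.cons_val_one] at hv1 hv2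
  have hW : W = LinearMap.ker (lfun a0 a1 a2 a3) := by
    rw [← hker]; ext x
    simp only [LinearMap.mem_ker, lfun_apply, hrepr x]
  have ha2 : a2 = -a0 := by linear_combination hv2
  have ha3 : a3 = -(μ * a1) := by linear_combination hv1
  have hfne : f ≠ 0 := by
    intro h0
    have : LinearMap.ker f = ⊤ := by rw [h0]; exact LinearMap.ker_zero
    rw [hker] at this
    rw [this] at h3
    rw [finrank_top, hfd] at h3
    exact absurd h3 (by norm_num)
  by_cases h1 : a1 = 0
  · left
    have ha0 : a0 ≠ 0 := by
      intro h0
      apply hfne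
      refine LinearMap.ext fun x => ?_
      rw [hrepr x, ha2, ha3, h1, h0]
      simp
    rw [hW, ha2, ha3, h1]
    have := ker_eq_of_scale (F := F) 1 0 (-1) 0 a0 ha0
    simpa using this
  · right
    refine ⟨a0 / a1, ?_⟩
    rw [hW, ha2, ha3]
    have hsc := ker_eq_of_scale (F := F) (a0/a1) 1 (-(a0/a1)) (-μ) a1 h1
    have e0 : a1 * (a0 / a1) = a0 := by field_simp
    have e2 : a1 * -(a0 / a1) = -a0 := by rw [mul_neg, e0]
    have e3 : a1 * -μ = -(μ * a1) := by ring
    rw [e0, mul_one, e2, e3] at hsc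
    exact hsc

lemma ker_ne_osc (μ a : F) (h9 : (3:F) ≠ 0 → (9:F) * μ ≠ 1) (τ : Option F) :
    ((LinearMap.ker (lfun a 1 (-a) (-μ)) : Submodule F (Fin 4 → F)) : Set (Fin 4 → F))
      ≠ oscSet τ := by
  intro h
  match τ with
  | none =>
      have hv : ![0, μ, 0, 1] ∈ LinearMap.ker (lfun a 1 (-a) (-μ)) := by
        rw [mem_ker_lfun]; simp
      have : (![0, μ, 0, 1] : Fin 4 → F) ∈ oscSet (none : Option F) := by
        rw [← h]; exact hv
      simp [oscSet] at this
  | some s =>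
      have m1 : ![3*s, 1, 0, 0] ∈ LinearMap.ker (lfun a 1 (-a) (-μ)) := by
        rw [← SetLike.mem_coe, h]; simp [oscSet]; try ring
      have m2 : ![0, s, 1, 0] ∈ LinearMap.ker (lfun a 1 (-a) (-μ)) := by
        rw [← SetLike.mem_coe, h]; simp [oscSet]; try ring
      have m3 : ![s^3, 0, 0, 1] ∈ LinearMap.ker (lfun a 1 (-a) (-μ)) := by
        rw [← SetLike.mem_coe, h]; simp [oscSet]; try ring
      rw [mem_ker_lfun] at m1 m2 m3
      simp at m1 m2 m3
      have h3 : (3:F) ≠ 0 := by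
        intro h3
        rw [h3] at m1; simp at m1
      have hE : (9:F) * μ = 1 := by
        linear_combination (3*s^2-1) * m1 - 3*s * m2 - 9 * m3
      exact h9 h3 hE

lemma count_translate (W : Submodule F (Fin 4 → F)) :
    {p : Submodule F (Fin 4 → F) |
        (∃ τ : Option F, p = Submodule.span F {Pvec τ}) ∧ p ≤ W}
      = (fun τ : Option F => Submodule.span F {Pvec τ}) '' {τ : Option F | Pvec τ ∈ W} := by
  ext p
  simp only [Set.mem_setOf_eq, Set.mem_image]
  constructor
  · rintro ⟨⟨τ, rfl⟩, hle⟩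
    exact ⟨τ, (Submodule.span_singleton_le_iff_mem _ _).mp hle, rfl⟩
  · rintro ⟨τ, hmem, rfl⟩
    exact ⟨⟨τ, rfl⟩, (Submodule.span_singleton_le_iff_mem _ _).mpr hmem⟩

lemma ncard_count (W : Submodule F (Fin 4 → F)) :
    Set.ncard {p : Submodule F (Fin 4 → F) |
        (∃ τ : Option F, p = Submodule.span F {Pvec τ}) ∧ p ≤ W}
      = Set.ncard {τ : Option F | Pvec τ ∈ W} := by
  rw [count_translate, Set.ncard_image_of_injective _ spanP_inj]

lemma pvec_mem_ker (μ a : F) (τ : Option F) :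
    Pvec τ ∈ LinearMap.ker (lfun a 1 (-a) (-μ))
      ↔ (τ = none ∧ a = 0) ∨
        (∃ t, τ = some t ∧ a * t ^ 3 + t ^ 2 - a * t - μ = 0) := by
  match τ with
  | none =>
      rw [mem_ker_lfun]
      simp [Pvec]
  | some t =>
      rw [mem_ker_lfun]
      simp only [Pvec]
      simp
      constructor
      · intro h; linear_combination h
      · intro h; linear_combination h

lemma mem_set_ne_zero (μ a : F) (ha : a ≠ 0) :
    {τ : Option F | Pvec τ ∈ LinearMap.ker (lfun a 1 (-a) (-μ))}
      = some '' {t : F | t ^ 3 + a⁻¹ * t ^ 2 - t - μ * a⁻¹ = 0} := by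
  ext τ
  rw [Set.mem_setOf_eq, pvec_mem_ker]
  constructor
  · rintro (⟨rfl, h⟩ | ⟨t, rfl, h⟩)
    · exact absurd h ha
    · refine ⟨t, ?_, rfl⟩
      rw [Set.mem_setOf_eq]
      have : t ^ 3 + a⁻¹ * t ^ 2 - t - μ * a⁻¹ = a⁻¹ * (a * t ^ 3 + t ^ 2 - a * t - μ) := by
        field_simp
      rw [this, h, mul_zero]
  · rintro ⟨t, ht, rfl⟩
    rw [Set.mem_setOf_eq] at ht
    refine Or.inr ⟨t, rfl, ?_⟩
    have : a * t ^ 3 + t ^ 2 - a * t - μ = a * (t ^ 3 + a⁻¹ * t ^ 2 - t - μ * a⁻¹) := by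
      field_simp
    rw [this, ht, mul_zero]

lemma mem_set_zero (μ : F) (hns : ¬ IsSquare μ) :
    {τ : Option F | Pvec τ ∈ LinearMap.ker (lfun (0:F) 1 (-0) (-μ))} = {none} := by
  ext τ
  rw [Set.mem_setOf_eq, pvec_mem_ker]
  constructor
  · rintro (⟨rfl, _⟩ | ⟨t, rfl, h⟩)
    · rfl
    · exfalso
      apply hns
      exact ⟨t, by linear_combination -h⟩
  · rintro rfl
    exact Or.inl ⟨rfl, rfl⟩

end Aux

/-- Let `q ≥ 5` be a prime power, `μ ∈ F_q^*`, `μ ≠ 1`, and moreover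
`μ ≠ 1/9` when `q` is odd and not divisible by `3`. Let `Ñ₁(μ)` be the number of
`c ∈ F_q^*` such that `t³ + ct² - t - μc` has exactly one root in `F_q`. Then the number
of planes of `PG(3,q)` containing the line `ℓ_μ`, containing exactly one point of the
twisted cubic, and not osculating, equals `Ñ₁(μ)` if `μ` is a square and `Ñ₁(μ) + 1`
otherwise. -/
theorem stmt10 (q : ℕ) (hq5 : 5 ≤ q)
    (F : Type*) [Field F] [Fintype F] (hcard : Fintype.card F = q)
    (μ : F) (hμ0 : μ ≠ 0) (hμ1 : μ ≠ 1)
    (hμ9 : Odd q → ¬ (3 ∣ q) → μ ≠ 1 / 9) :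
    let lmu : Submodule F (Fin 4 → F) := Submodule.span F {![0, μ, 0, 1], ![1, 0, 1, 0]}
    let Ntilde1 : ℕ := Set.ncard {c : F | c ≠ 0 ∧
      ({t : F | t ^ 3 + c * t ^ 2 - t - μ * c = 0} : Set F).ncard = 1}
    let n : ℕ := Set.ncard {W : Submodule F (Fin 4 → F) |
      Module.finrank F W = 3 ∧ lmu ≤ W ∧
      Set.ncard {p : Submodule F (Fin 4 → F) |
        (∃ τ : Option F, p = Submodule.span F {Pvec τ}) ∧ p ≤ W} = 1 ∧
      ∀ τ : Option F, (W : Set (Fin 4 → F)) ≠ oscSet τ}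
    (IsSquare μ → n = Ntilde1) ∧ (¬ IsSquare μ → n = Ntilde1 + 1) := by
  intro lmu Ntilde1 n
  -- derived arithmetic hypothesis for the osculating-plane exclusion
  have h9 : (3:F) ≠ 0 → (9:F) * μ ≠ 1 := by
    intro h3 h9eq
    by_cases h2 : (2:F) = 0
    · have h91 : (9:F) = 1 := by linear_combination 4 * h2
      rw [h91, one_mul] at h9eq
      exact hμ1 h9eq
    · -- odd characteristic
      set p := ringChar F with hp
      haveI : CharP F p := ringChar.charP F
      have hprime : p.Prime := CharP.char_is_prime F p
      obtain ⟨m, hm, hcard'⟩ := FiniteField.card F p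
      have hp2 : p ≠ 2 := by
        intro h
        apply h2
        have := CharP.cast_eq_zero F p
        rw [h] at this
        exact_mod_cast this
      have hoddq : Odd q := by
        rw [← hcard, hcard']
        exact (hprime.odd_of_ne_two hp2).pow
      have h3q : ¬ (3 ∣ q) := by
        intro hdvd
        rw [← hcard, hcard'] at hdvd
        have h3p : 3 ∣ p := Nat.Prime.dvd_of_dvd_pow (by norm_num) hdvd
        have : (3 : ℕ) = p := (Nat.prime_dvd_prime_iff_eq (by norm_num) hprime).mp h3p
        apply h3
        have h3c : ((3:ℕ):F) = 0 := by
          rw [this]; exact CharP.cast_eq_zero F p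
        exact_mod_cast h3c
      have h9ne : (9:F) ≠ 0 := by
        have : (9:F) = 3 * 3 := by norm_num
        rw [this]
        exact mul_ne_zero h3 h3
      apply hμ9 hoddq h3q
      field_simp
      linear_combination h9eq
  haveI : Finite (Submodule F (Fin 4 → F)) :=
    Finite.of_injective (fun W => (W : Set (Fin 4 → F))) SetLike.coe_injective
  set A : F → Submodule F (Fin 4 → F) := fun a => LinearMap.ker (lfun a 1 (-a) (-μ)) with hA
  have hAinj : Function.Injective A := by
    intro a a' h
    have hx : ![1, -a, 0, 0] ∈ A a := by
      rw [hA, mem_ker_lfun]; simp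
    rw [h, hA, mem_ker_lfun] at hx
    simp at hx
    linear_combination -hx
  set T : Set F := {a : F | (a ≠ 0 ∧ Set.ncard {t : F | t ^ 3 + a⁻¹ * t ^ 2 - t - μ * a⁻¹ = 0} = 1)
    ∨ (a = 0 ∧ ¬ IsSquare μ)} with hT
  have hSeq : {W : Submodule F (Fin 4 → F) |
      Module.finrank F W = 3 ∧ lmu ≤ W ∧
      Set.ncard {p : Submodule F (Fin 4 → F) |
        (∃ τ : Option F, p = Submodule.span F {Pvec τ}) ∧ p ≤ W} = 1 ∧
      ∀ τ : Option F, (W : Set (Fin 4 → F)) ≠ oscSet τ} = A '' T := by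
    ext W
    simp only [Set.mem_setOf_eq, Set.mem_image]
    constructor
    · rintro ⟨h3f, hle, hcnt, hosc⟩
      rcases plane_classify μ W h3f hle with hWinf | ⟨a, hWa⟩
      · exfalso
        rw [hWinf, ncard_count] at hcnt
        obtain ⟨x, hx⟩ := Set.ncard_eq_one.mp hcnt
        have m0 : (some (0:F)) ∈ {τ : Option F | Pvec τ ∈ LinearMap.ker (lfun (1:F) 0 (-1) 0)} := by
          rw [Set.mem_setOf_eq, mem_ker_lfun]; simp [Pvec]
        have m1 : (some (1:F)) ∈ {τ : Option F | Pvec τ ∈ LinearMap.ker (lfun (1:F) 0 (-1) 0)} := by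
          rw [Set.mem_setOf_eq, mem_ker_lfun]; simp [Pvec]
        rw [hx, Set.mem_singleton_iff] at m0 m1
        have h01 : (some (0:F)) = some (1:F) := m0.trans m1.symm
        simp at h01
      · refine ⟨a, ?_, hWa.symm⟩
        rw [hT, Set.mem_setOf_eq]
        by_cases ha : a = 0
        · right
          refine ⟨ha, ?_⟩
          rintro ⟨r, hr⟩
          rw [hWa, ncard_count] at hcnt
          obtain ⟨x, hx⟩ := Set.ncard_eq_one.mp hcnt
          have m0 : (none : Option F) ∈
              {τ : Option F | Pvec τ ∈ LinearMap.ker (lfun a 1 (-a) (-μ))} := by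
            rw [Set.mem_setOf_eq, pvec_mem_ker]; exact Or.inl ⟨rfl, ha⟩
          have m1 : (some r) ∈
              {τ : Option F | Pvec τ ∈ LinearMap.ker (lfun a 1 (-a) (-μ))} := by
            rw [Set.mem_setOf_eq, pvec_mem_ker]
            exact Or.inr ⟨r, rfl, by rw [ha, hr]; ring⟩
          rw [hx, Set.mem_singleton_iff] at m0 m1
          exact (Option.some_ne_none r).symm (m0.trans m1.symm)
        · left
          refine ⟨ha, ?_⟩
          rw [hWa, ncard_count, mem_set_ne_zero μ a ha,
            Set.ncard_image_of_injective _ (Option.some_injective F)] at hcnt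
          exact hcnt
    · rintro ⟨a, haT, rfl⟩
      refine ⟨finrank_ker_lfun a 1 (-a) (-μ) (Or.inr one_ne_zero), ?_, ?_, ker_ne_osc μ a h9⟩
      · show Submodule.span F {![0, μ, 0, 1], ![1, 0, 1, 0]} ≤ LinearMap.ker (lfun a 1 (-a) (-μ))
        rw [Submodule.span_le]
        rintro x hx
        simp only [Set.mem_insert_iff, Set.mem_singleton_iff] at hx
        rcases hx with rfl | rfl
        · rw [SetLike.mem_coe, mem_ker_lfun]; simp
        · rw [SetLike.mem_coe, mem_ker_lfun]; simp
      · rw [hT, Set.mem_setOf_eq] at haT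
        rcases haT with ⟨ha, hcnt⟩ | ⟨rfl, hns⟩
        · rw [ncard_count, show A a = LinearMap.ker (lfun a 1 (-a) (-μ)) from rfl,
            mem_set_ne_zero μ a ha,
            Set.ncard_image_of_injective _ (Option.some_injective F)]
          exact hcnt
        · rw [ncard_count, show A 0 = LinearMap.ker (lfun (0:F) 1 (-0) (-μ)) from rfl,
            mem_set_zero μ hns, Set.ncard_singleton]
  have hn : n = Set.ncard T := by
    unfold n
    rw [hSeq, Set.ncard_image_of_injective _ hAinj]
  set T1 : Set F := {a : F | a ≠ 0 ∧
    Set.ncard {t : F | t ^ 3 + a⁻¹ * t ^ 2 - t - μ * a⁻¹ = 0} = 1} with hT1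
  have hT1card : Set.ncard T1 = Ntilde1 := by
    have himg : T1 = (fun c : F => c⁻¹) '' {c : F | c ≠ 0 ∧
        Set.ncard {t : F | t ^ 3 + c * t ^ 2 - t - μ * c = 0} = 1} := by
      ext a
      simp only [hT1, Set.mem_setOf_eq, Set.mem_image]
      constructor
      · rintro ⟨ha, hcnt⟩
        exact ⟨a⁻¹, ⟨inv_ne_zero ha, hcnt⟩, inv_inv a⟩
      · rintro ⟨c, ⟨hc, hcnt⟩, rfl⟩
        exact ⟨inv_ne_zero hc, by rwa [inv_inv]⟩
    rw [himg, Set.ncard_image_of_injective _ inv_injective]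
  constructor
  · intro hsq
    have hTT : T = T1 := by
      ext a
      simp only [hT, hT1, Set.mem_setOf_eq]
      constructor
      · rintro (h | ⟨_, hns2⟩)
        · exact h
        · exact absurd hsq hns2
      · exact Or.inl
    rw [hn, hTT, hT1card]
  · intro hns
    have hTT : T = insert 0 T1 := by
      ext a
      simp only [hT, hT1, Set.mem_insert_iff, Set.mem_setOf_eq]
      constructor
      · rintro (h | ⟨rfl, _⟩)
        · exact Or.inr h
        · exact Or.inl rfl
      · rintro (rfl | h)
        · exact Or.inr ⟨rfl, hns⟩
        · exact Or.inl h
    rw [hn, hTT, Set.ncard_insert_of_notMem (fun h => h.1 rfl) (Set.toFinite T1), hT1card]
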